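/- The element 8 + 3√7 is a totally positive unit in the ring of integers of ℚ(√7) and is not a square in ℚ₃ (under the embedding of ℚ(√7) into ℚ₃ given by a 3-adic square root of 7). -/

import Mathlib

instance : Fact (Nat.Prime 3) := ⟨by norm_num⟩

lemma sqrt7_sq : Real.sqrt 7 ^ 2 = 7 := Real.sq_sqrt (by norm_num)

lemma integral_aux (x : ℝ) (hx : x ^ 2 - 16 * x + 1 = 0) : IsIntegral ℤ x := by
  refine ⟨Polynomial.X ^ 2 - Polynomial.C 16 * Polynomial.X + Polynomial.C 1, ?_, ?_⟩
  · monicity!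
  · simp [Polynomial.eval₂, Polynomial.eval₂_add, Polynomial.eval₂_sub]
    linarith [hx]

lemma norm_le_one_of_sq (s : ℚ_[3]) (hs : s ^ 2 = 7) : ‖s‖ ≤ 1 := by
  have h7 : ‖(7 : ℚ_[3])‖ ≤ 1 := by
    have := Padic.norm_int_le_one (p := 3) 7
    simpa using this
  have : ‖s‖ ^ 2 ≤ 1 := by
    rw [← norm_pow, hs]; exact h7
  nlinarith [norm_nonneg s]

lemma no_sq_zmod3 : ∀ a : ZMod 3, a ^ 2 ≠ 2 := by decide

theorem eight_add_three_sqrt7_totally_positive_unit_not_square_in_Qp3 :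
    (0 < 8 + 3 * Real.sqrt 7) ∧ (0 < 8 - 3 * Real.sqrt 7) ∧
      IsIntegral ℤ (8 + 3 * Real.sqrt 7) ∧ IsIntegral ℤ (8 - 3 * Real.sqrt 7) ∧
      (8 + 3 * Real.sqrt 7) * (8 - 3 * Real.sqrt 7) = 1 ∧
      ∀ s : ℚ_[3], s ^ 2 = 7 → ¬∃ y : ℚ_[3], 8 + 3 * s = y ^ 2 := by
  have h7 := sqrt7_sq
  have hnn := Real.sqrt_nonneg 7
  refine ⟨by positivity, by nlinarith, ?_, ?_, by nlinarith, ?_⟩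
  · exact integral_aux _ (by nlinarith)
  · exact integral_aux _ (by nlinarith)
  · rintro s hs ⟨y, hy⟩
    have hsle : ‖s‖ ≤ 1 := norm_le_one_of_sq s hs
    have hyle : ‖y‖ ≤ 1 := by
      have h1 : ‖y ^ 2‖ ≤ 1 := by
        rw [← hy]
        calc ‖(8 : ℚ_[3]) + 3 * s‖ ≤ max ‖(8 : ℚ_[3])‖ ‖3 * s‖ := Padic.nonarchimedean _ _
        _ ≤ 1 := by
          apply max_le
          · simpa using Padic.norm_int_le_one (p := 3) 8
          · rw [norm_mul]
            have h3 : ‖(3 : ℚ_[3])‖ ≤ 1 := by simpa using Padic.norm_int_le_one (p := 3) 3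
            calc ‖(3:ℚ_[3])‖ * ‖s‖ ≤ 1 * 1 := by
                  exact mul_le_mul h3 hsle (norm_nonneg _) zero_le_one
            _ = 1 := by ring
      rw [norm_pow] at h1
      nlinarith [norm_nonneg y]
    set z : ℤ_[3] := ⟨y, hyle⟩ with hz
    set t : ℤ_[3] := ⟨s, hsle⟩ with ht
    have key : z ^ 2 = ((8:ℕ):ℤ_[3]) + ((3:ℕ):ℤ_[3]) * t := by
      apply Subtype.ext
      push_cast [hz, ht]
      exact hy.symm
    have h2 : (PadicInt.toZMod z) ^ 2 = 2 := by
      have h := congrArg PadicInt.toZMod key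
      rw [map_pow, map_add, map_mul, map_natCast, map_natCast] at h
      rw [h, show ((3:ℕ):ZMod 3) = 0 by decide, zero_mul, add_zero,
        show ((8:ℕ):ZMod 3) = 2 by decide]
    exact no_sq_zmod3 _ h2
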